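/- There exists an SPE of the initialized reachability game (G,v₀) whose cost profile c satisfies x ≤ c ≤ y if and only if the counter graph 𝐂(λ*) contains an infinite path from the starting vertex x₀^C that is a lasso h g^ω with |hg| ≤ d + 2·|𝐂(λ*)|, where d = max{x_i : x_i < +∞}, and whose corresponding play has cost profile between x and y. -/

import Mathlib

open scoped Classical

namespace SPE

variable {V : Type*} {P : Type*}

/-- Vertices of the extended game: a base vertex together with the set of players
having already visited their target set. -/
abbrev XV (V P : Type*) := V × Set P

/-- Edges of the extended game induced by base edges `E` and target sets `F`. -/
def XEdge (E : V → V → Prop) (F : P → Set V) (a b : XV V P) : Prop :=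
  E a.1 b.1 ∧ b.2 = a.2 ∪ {i | b.1 ∈ F i}

/-- Plays of the extended game starting at `x`. -/
def IsPlay (E : V → V → Prop) (F : P → Set V) (x : XV V P) (ρ : ℕ → XV V P) : Prop :=
  ρ 0 = x ∧ ∀ k, XEdge E F (ρ k) (ρ (k + 1))

/-- Cost of player `i` along the suffix `ρ_{≥ n}`: the least `k` such that `i` belongs to
the second component of `ρ (n + k)`, and `⊤` if there is no such `k`. -/
noncomputable def costFrom (ρ : ℕ → XV V P) (n : ℕ) (i : P) : ℕ∞ :=
  sInf ((fun k : ℕ => (k : ℕ∞)) '' {k | i ∈ (ρ (n + k)).2})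

/-- Cost of player `i` along the play `ρ` of the extended game. -/
noncomputable def cost (ρ : ℕ → XV V P) (i : P) : ℕ∞ := costFrom ρ 0 i

/-- `λ`-consistency of a play. -/
def Consistent (own : V → P) (lam : XV V P → ℕ∞) (ρ : ℕ → XV V P) : Prop :=
  ∀ n, costFrom ρ n (own (ρ n).1) ≤ lam (ρ n)

/-- The set `Λ(x)` of `λ`-consistent plays from `x`. -/
def Lam (E : V → V → Prop) (F : P → Set V) (own : V → P) (lam : XV V P → ℕ∞)
    (x : XV V P) : Set (ℕ → XV V P) :=
  {ρ | IsPlay E F x ρ ∧ Consistent own lam ρ}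

/-- The initial labeling `λ⁰`. -/
noncomputable def lam0 (own : V → P) : XV V P → ℕ∞ :=
  fun v => if own v.1 ∈ v.2 then 0 else ⊤

/-- The labeling update operator. -/
noncomputable def update (E : V → V → Prop) (F : P → Set V) (own : V → P)
    (lam : XV V P → ℕ∞) (v : XV V P) : ℕ∞ :=
  if own v.1 ∈ v.2 then 0
  else ⨅ w ∈ {w : XV V P | XEdge E F v w},
    (1 + sSup ((fun ρ => cost ρ (own v.1)) '' Lam E F own lam w))

/-- Prepend a finite list in front of an infinite sequence. -/
def listAppendSeq {α : Type*} (h : List α) (ρ : ℕ → α) : ℕ → α :=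
  fun k => if hk : k < h.length then h.get ⟨k, hk⟩ else ρ (k - h.length)

/-- Validity of a strategy profile in the extended game: the prescribed moves follow edges. -/
def StratValid (E : V → V → Prop) (F : P → Set V)
    (σ : List (XV V P) → XV V P → XV V P) : Prop :=
  ∀ h v, XEdge E F v (σ h v)

/-- The outcome of a strategy profile after history `h` from vertex `v`. -/
def outcome (σ : List (XV V P) → XV V P → XV V P) :
    List (XV V P) → XV V P → ℕ → XV V P
  | _, v, 0 => v
  | h, v, n + 1 => outcome σ (h ++ [v]) (σ h v) n

/-- `h·v` is a history of the initialized extended game `(X, x0)`. -/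
def IsHistoryFrom (E : V → V → Prop) (F : P → Set V) (x0 : XV V P)
    (h : List (XV V P)) (v : XV V P) : Prop :=
  (h ++ [v]).head? = some x0 ∧ (h ++ [v]).Chain' (XEdge E F)

/-- Cost of player `i` of the play `h·ρ` (cost in the subgame after `h`). -/
noncomputable def costAfter (h : List (XV V P)) (ρ : ℕ → XV V P) (i : P) : ℕ∞ :=
  sInf ((fun k : ℕ => (k : ℕ∞)) '' {k | i ∈ (listAppendSeq h ρ k).2})

/-- `τ` is a unilateral deviation of player `i` from the profile `σ`. -/
def Deviation (own : V → P) (σ τ : List (XV V P) → XV V P → XV V P) (i : P) : Prop :=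
  ∀ h v, own v.1 ≠ i → τ h v = σ h v

/-- Subgame perfect equilibrium of the initialized extended game. -/
def IsSPE (E : V → V → Prop) (F : P → Set V) (own : V → P) (x0 : XV V P)
    (σ : List (XV V P) → XV V P → XV V P) : Prop :=
  StratValid E F σ ∧
  ∀ h v, IsHistoryFrom E F x0 h v → ∀ (i : P) τ, StratValid E F τ →
    Deviation own σ τ i →
    costAfter h (outcome σ h v) i ≤ costAfter h (outcome τ h v) i

/-- Vertices of the counter graph: an extended vertex with one counter per player. -/
abbrev CV (V P : Type*) := XV V P × (P → ℕ∞)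

/-- Edges of the counter graph `𝐂(λ)`. -/
def CEdge (E : V → V → Prop) (F : P → Set V) (own : V → P) (lam : XV V P → ℕ∞)
    (a b : CV V P) : Prop :=
  XEdge E F a.1 b.1 ∧
  ∀ i : P,
    (i ∈ b.1.2 ∧ b.2 i = 0) ∨
    (i ∉ b.1.2 ∧ own b.1.1 ≠ i ∧ 1 < a.2 i ∧ b.2 i = a.2 i - 1) ∨
    (i ∉ b.1.2 ∧ own b.1.1 = i ∧ 1 < a.2 i ∧ b.2 i = min (a.2 i - 1) (lam b.1))

/-- The starting vertex `v^C` of the counter graph associated with `v`. -/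
noncomputable def startC (own : V → P) (lam : XV V P → ℕ∞) (v : XV V P) : CV V P :=
  (v, fun i => if i ∈ v.2 then 0 else if own v.1 = i then lam v else ⊤)

/-- The maximal finite range of `λ` restricted to a set `S` of extended vertices. -/
noncomputable def mR (lam : XV V P → ℕ∞) (S : Set (XV V P)) : ℕ :=
  sSup {c : ℕ | ∃ w ∈ S, lam w = (c : ℕ∞)}

/-- Plays of the base game from `v0`. -/
def IsPlayB (E : V → V → Prop) (v0 : V) (ρ : ℕ → V) : Prop :=
  ρ 0 = v0 ∧ ∀ k, E (ρ k) (ρ (k + 1))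

/-- Cost of player `i` of the play `h·ρ` in the base game. -/
noncomputable def costB (F : P → Set V) (h : List V) (ρ : ℕ → V) (i : P) : ℕ∞ :=
  sInf ((fun k : ℕ => (k : ℕ∞)) '' {k | listAppendSeq h ρ k ∈ F i})

/-- Validity of a strategy profile in the base game. -/
def StratValidB (E : V → V → Prop) (σ : List V → V → V) : Prop := ∀ h v, E v (σ h v)

/-- The outcome of a strategy profile of the base game after history `h` from `v`. -/
def outcomeB (σ : List V → V → V) : List V → V → ℕ → V
  | _, v, 0 => v
  | h, v, n + 1 => outcomeB σ (h ++ [v]) (σ h v) n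

/-- `h·v` is a history of the initialized base game. -/
def IsHistoryB (E : V → V → Prop) (v0 : V) (h : List V) (v : V) : Prop :=
  (h ++ [v]).head? = some v0 ∧ (h ++ [v]).Chain' E

/-- `τ` is a unilateral deviation of player `i` from `σ` in the base game. -/
def DeviationB (own : V → P) (σ τ : List V → V → V) (i : P) : Prop :=
  ∀ h v, own v ≠ i → τ h v = σ h v

/-- Subgame perfect equilibrium of the initialized base game. -/
def IsSPEB (E : V → V → Prop) (F : P → Set V) (own : V → P) (v0 : V)
    (σ : List V → V → V) : Prop :=
  StratValidB E σ ∧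
  ∀ h v, IsHistoryB E v0 h v → ∀ (i : P) τ, StratValidB E τ →
    DeviationB own σ τ i →
    costB F h (outcomeB σ h v) i ≤ costB F h (outcomeB τ h v) i


section AuxLemmas

variable {E : V → V → Prop} {F : P → Set V} {own : V → P} {lam : XV V P → ℕ∞}

lemma one_le_sub_one {a : ℕ∞} (h : 1 < a) : 1 ≤ a - 1 :=
  ENat.le_sub_of_add_le_left (by simp) (by simpa using Order.add_one_le_of_lt h)

lemma costFrom_le {ρ : ℕ → XV V P} {n k : ℕ} {i : P} (h : i ∈ (ρ (n + k)).2) :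
    costFrom ρ n i ≤ k := sInf_le ⟨k, h, rfl⟩

lemma costFrom_zero {ρ : ℕ → XV V P} {n : ℕ} {i : P} (h : i ∈ (ρ n).2) :
    costFrom ρ n i = 0 :=
  le_antisymm (by simpa using costFrom_le (n := n) (k := 0) (by simpa using h)) (zero_le)

lemma le_costFrom {ρ : ℕ → XV V P} {n : ℕ} {i : P} {c : ℕ}
    (h : ∀ k < c, i ∉ (ρ (n + k)).2) : (c : ℕ∞) ≤ costFrom ρ n i :=
  le_sInf (by
    rintro b ⟨k, hk, rfl⟩
    simp only []
    exact_mod_cast Nat.le_of_not_lt fun hlt => h k hlt hk)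

lemma costFrom_eq_top {ρ : ℕ → XV V P} {n : ℕ} {i : P}
    (h : ∀ k, i ∉ (ρ (n + k)).2) : costFrom ρ n i = ⊤ := by
  rw [costFrom]
  refine sInf_eq_top.2 ?_
  rintro b ⟨k, hk, rfl⟩
  exact absurd hk (h k)

lemma costFrom_eq_find {ρ : ℕ → XV V P} {n : ℕ} {i : P}
    (h : ∃ k, i ∈ (ρ (n + k)).2) : costFrom ρ n i = Nat.find h :=
  le_antisymm (costFrom_le (Nat.find_spec h)) (le_costFrom fun k hk => Nat.find_min h hk)

lemma costFrom_succ {ρ : ℕ → XV V P} {n : ℕ} {i : P} (h : i ∉ (ρ n).2) :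
    costFrom ρ n i = 1 + costFrom ρ (n + 1) i := by
  by_cases h2 : ∃ k, i ∈ (ρ (n + 1 + k)).2
  · have h1 : ∃ k, i ∈ (ρ (n + k)).2 := ⟨Nat.find h2 + 1, by
      have := Nat.find_spec h2
      rwa [show n + 1 + Nat.find h2 = n + (Nat.find h2 + 1) by omega] at this⟩
    rw [costFrom_eq_find h1, costFrom_eq_find h2]
    have : Nat.find h1 = Nat.find h2 + 1 := by
      apply le_antisymm
      · apply Nat.find_le
        have := Nat.find_spec h2
        rwa [show n + (Nat.find h2 + 1) = n + 1 + Nat.find h2 by omega]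
      · have hne : Nat.find h1 ≠ 0 := by
          intro e
          have := Nat.find_spec h1
          rw [e] at this
          simp only [Nat.add_zero] at this
          exact h this
        rcases Nat.exists_eq_succ_of_ne_zero hne with ⟨j, hj⟩
        have hjs := Nat.find_spec h1
        rw [hj] at hjs ⊢
        have : i ∈ (ρ (n + 1 + j)).2 := by rwa [show n + 1 + j = n + (j+1) by omega]
        exact Nat.succ_le_succ (Nat.find_le this)
    rw [this]; push_cast; ring
  · push_neg at h2
    rw [costFrom_eq_top h2, costFrom_eq_top]
    · simp
    intro k
    rcases k with _ | j
    · simpa using h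
    · have := h2 j; rwa [show n + 1 + j = n + (j+1) by omega] at this

lemma listAppendSeq_nil {α : Type*} (ρ : ℕ → α) : listAppendSeq [] ρ = ρ := by
  funext k; simp [listAppendSeq]

lemma costB_eq_cost (F : P → Set V) (ρ : ℕ → V) (i : P) :
    costB F [] ρ i = cost (fun k => ((ρ k, {i | ∃ j ≤ k, ρ j ∈ F i}) : XV V P)) i := by
  rw [costB, cost, costFrom]
  simp only [listAppendSeq_nil, Nat.zero_add]
  apply le_antisymm
  · apply le_sInf
    rintro b ⟨k, hk, rfl⟩
    simp only []
    obtain ⟨j, hj, hf⟩ := hk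
    have h1 : sInf ((fun k : ℕ => (k : ℕ∞)) '' {k | ρ k ∈ F i}) ≤ (j : ℕ∞) :=
      sInf_le ⟨j, hf, rfl⟩
    exact h1.trans (by exact_mod_cast hj)
  · apply le_sInf
    rintro b ⟨k, hk, rfl⟩
    exact sInf_le ⟨k, ⟨k, le_refl k, hk⟩, rfl⟩

lemma cost_def (rho : ℕ → XV V P) (i : P) : cost rho i = costFrom rho 0 i := rfl

lemma outcomeB_edge {σ : List V → V → V} (hσ : StratValidB E σ) :
    ∀ (n : ℕ) (h : List V) (v : V), E (outcomeB σ h v n) (outcomeB σ h v (n + 1)) := by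
  intro n
  induction n with
  | zero => intro h v; exact hσ h v
  | succ n ih => intro h v; exact ih (h ++ [v]) (σ h v)

lemma one_le_lam (hfix : ∀ w, update E F own lam w = lam w) {w : XV V P}
    (hw : own w.1 ∉ w.2) : 1 ≤ lam w := by
  rw [← hfix w, update, if_neg hw]
  exact le_iInf₂ fun w' _ => le_self_add

lemma counter_pos (hfix : ∀ w, update E F own lam w = lam w) {π : ℕ → CV V P} {v : XV V P}
    (h0 : π 0 = startC own lam v)
    (hE : ∀ k, CEdge E F own lam (π k) (π (k + 1))) :
    ∀ n i, i ∉ (π n).1.2 → 1 ≤ (π n).2 i := by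
  intro n i hi
  cases n with
  | zero =>
    rw [h0] at hi ⊢
    simp only [startC] at hi ⊢
    rw [if_neg hi]
    by_cases ho : own v.1 = i
    · rw [if_pos ho]
      exact one_le_lam hfix (by rw [ho]; exact hi)
    · rw [if_neg ho]; exact le_top
  | succ k =>
    rcases (hE k).2 i with ⟨h1, _⟩ | ⟨_, _, hlt, he⟩ | ⟨hb, ho, hlt, he⟩
    · exact absurd h1 hi
    · rw [he]; exact one_le_sub_one hlt
    · rw [he]
      exact le_min (one_le_sub_one hlt) (one_le_lam hfix (by rw [ho]; exact hb))

lemma costFrom_le_counter (hfix : ∀ w, update E F own lam w = lam w)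
    {π : ℕ → CV V P} {v : XV V P}
    (h0 : π 0 = startC own lam v)
    (hE : ∀ k, CEdge E F own lam (π k) (π (k + 1))) :
    ∀ n i, costFrom (fun k => (π k).1) n i ≤ (π n).2 i := by
  have main : ∀ c : ℕ, ∀ n i, (π n).2 i = (c : ℕ∞) →
      ∃ k : ℕ, (k : ℕ∞) ≤ (c : ℕ∞) ∧ i ∈ (π (n + k)).1.2 := by
    intro c
    induction c using Nat.strong_induction_on with
    | _ c IH =>
      intro n i hc
      by_cases hi : i ∈ (π n).1.2
      · exact ⟨0, by simp, by simpa using hi⟩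
      · have hone : (1 : ℕ∞) ≤ (c : ℕ∞) := hc ▸ counter_pos hfix h0 hE n i hi
        rcases (hE n).2 i with ⟨h1, _⟩ | ⟨hb, _, hlt, he⟩ | ⟨hb, _, hlt, he⟩
        · exact ⟨1, by exact_mod_cast hone, h1⟩
        all_goals {
          have hle : (π (n + 1)).2 i ≤ (π n).2 i - 1 := by
            rw [he]
            all_goals exact min_le_left _ _
          rw [hc] at hle hlt
          have hc1 : (1:ℕ) < c := by exact_mod_cast hlt
          have hne : (π (n + 1)).2 i ≠ ⊤ := by
            intro e
            rw [e] at hle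
            have : ((c : ℕ∞) - 1) ≠ ⊤ := by
              simp [ENat.sub_ne_top_iff]
            exact this (top_le_iff.1 hle)
          set c' := ((π (n + 1)).2 i).toNat with hc'def
          have hc' : (π (n + 1)).2 i = (c' : ℕ∞) := (ENat.coe_toNat hne).symm
          have hcc : c' ≤ c - 1 := by
            rw [hc'] at hle
            have : ((c - 1 : ℕ) : ℕ∞) = (c : ℕ∞) - 1 := by simp
            rw [← this] at hle
            exact_mod_cast hle
          obtain ⟨k, hk, hvis⟩ := IH c' (by omega) (n + 1) i hc'
          refine ⟨k + 1, ?_, by rwa [show n + (k + 1) = n + 1 + k by omega]⟩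
          have hkc : k ≤ c' := by exact_mod_cast hk
          exact_mod_cast (by omega : k + 1 ≤ c)
        }
  intro n i
  by_cases h : (π n).2 i = ⊤
  · rw [h]; exact le_top
  · obtain ⟨k, hk, hvis⟩ := main ((π n).2 i).toNat n i (ENat.coe_toNat h).symm
    rw [← ENat.coe_toNat h]
    exact (costFrom_le hvis).trans hk

lemma consistent_of_cpath (hfix : ∀ w, update E F own lam w = lam w)
    {π : ℕ → CV V P} {v : XV V P}
    (h0 : π 0 = startC own lam v)
    (hE : ∀ k, CEdge E F own lam (π k) (π (k + 1))) :
    Consistent own lam (fun k => (π k).1) := by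
  intro n
  by_cases hi : own (π n).1.1 ∈ (π n).1.2
  · rw [costFrom_zero hi]; exact zero_le
  · have hmain := costFrom_le_counter hfix h0 hE n (own (π n).1.1)
    refine hmain.trans ?_
    cases n with
    | zero =>
      replace hi : own v.1 ∉ v.2 := by rw [h0] at hi; exact hi
      show (π 0).2 (own (π 0).1.1) ≤ lam (π 0).1
      rw [h0]
      show (if own v.1 ∈ v.2 then 0 else if own v.1 = own v.1 then lam v else ⊤) ≤ lam v
      rw [if_neg hi, if_pos rfl]
    | succ k =>
      rcases (hE k).2 (own (π (k+1)).1.1) with ⟨h1, _⟩ | ⟨_, ho, _, _⟩ | ⟨_, _, _, he⟩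
      · exact absurd h1 hi
      · exact absurd rfl ho
      · rw [he]; exact min_le_right _ _

lemma vis_eq_of_cpath {v0 : V} {π : ℕ → CV V P}
    (h0 : π 0 = startC own lam ((v0, {i | v0 ∈ F i}) : XV V P))
    (hE : ∀ k, CEdge E F own lam (π k) (π (k + 1))) :
    ∀ k, (π k).1.2 = {i | ∃ j ≤ k, (π j).1.1 ∈ F i} := by
  intro k
  induction k with
  | zero =>
    rw [h0]
    ext i
    simp only [startC, Set.mem_setOf_eq]
    constructor
    · intro hi; exact ⟨0, le_refl 0, by rw [h0]; exact hi⟩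
    · rintro ⟨j, hj, hf⟩
      interval_cases j
      rw [h0] at hf
      exact hf
  | succ k ih =>
    have := (hE k).1.2
    rw [this, ih]
    ext i
    simp only [Set.mem_union, Set.mem_setOf_eq]
    constructor
    · rintro (⟨j, hj, hf⟩ | hf)
      · exact ⟨j, by omega, hf⟩
      · exact ⟨k + 1, le_refl _, hf⟩
    · rintro ⟨j, hj, hf⟩
      rcases Nat.lt_or_ge j (k + 1) with h | h
      · exact Or.inl ⟨j, by omega, hf⟩
      · right; rwa [show j = k + 1 by omega] at hf

end AuxLemmas


section AuxLemmas2

variable {E : V → V → Prop} {F : P → Set V} {own : V → P} {lam : XV V P → ℕ∞}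

lemma lam_le_mR [Finite V] [Finite P] (lam : XV V P → ℕ∞) {w : XV V P} (h : lam w ≠ ⊤) :
    lam w ≤ (mR lam Set.univ : ℕ∞) := by
  have hw : lam w = ((lam w).toNat : ℕ∞) := (ENat.coe_toNat h).symm
  rw [hw, mR]
  apply Nat.cast_le.2
  apply le_csSup
  · apply Set.Finite.bddAbove
    apply Set.Finite.subset (Set.finite_range (fun w : XV V P => (lam w).toNat))
    rintro c ⟨w', _, hc⟩
    refine ⟨w', ?_⟩
    show (lam w').toNat = c
    rw [hc]
    simp
  · exact ⟨w, Set.mem_univ _, hw⟩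

/-- The canonical counters along an extended play. -/
noncomputable def ctr (own : V → P) (lam : XV V P → ℕ∞) (rh : ℕ → XV V P) : ℕ → P → ℕ∞
  | 0 => (startC own lam (rh 0)).2
  | (k+1) => fun i =>
      if i ∈ (rh (k+1)).2 then 0
      else if own (rh (k+1)).1 = i then min (ctr own lam rh k i - 1) (lam (rh (k+1)))
      else ctr own lam rh k i - 1

lemma ctr_sound {rh : ℕ → XV V P}
    (hmono : ∀ k, (rh k).2 ⊆ (rh (k+1)).2)
    (hcons : Consistent own lam rh) :
    ∀ k i, costFrom rh k i ≤ ctr own lam rh k i := by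
  intro k
  induction k with
  | zero =>
    intro i
    show costFrom rh 0 i ≤ (if i ∈ (rh 0).2 then 0 else if own (rh 0).1 = i then lam (rh 0) else ⊤)
    by_cases hi : i ∈ (rh 0).2
    · rw [if_pos hi, costFrom_zero hi]
    · rw [if_neg hi]
      by_cases ho : own (rh 0).1 = i
      · rw [if_pos ho, ← ho]
        exact hcons 0
      · rw [if_neg ho]; exact le_top
  | succ k ih =>
    intro i
    show costFrom rh (k+1) i ≤
      (if i ∈ (rh (k+1)).2 then 0
       else if own (rh (k+1)).1 = i then min (ctr own lam rh k i - 1) (lam (rh (k+1)))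
       else ctr own lam rh k i - 1)
    by_cases hi : i ∈ (rh (k+1)).2
    · rw [if_pos hi, costFrom_zero hi]
    · rw [if_neg hi]
      have hik : i ∉ (rh k).2 := fun hk => hi (hmono k hk)
      have hstep : 1 + costFrom rh (k+1) i ≤ ctr own lam rh k i :=
        (costFrom_succ hik).symm.le.trans (ih i)
      have hsub : costFrom rh (k+1) i ≤ ctr own lam rh k i - 1 :=
        ENat.le_sub_of_add_le_left (by simp) hstep
      by_cases ho : own (rh (k+1)).1 = i
      · rw [if_pos ho]
        refine le_min hsub ?_
        rw [← ho]
        exact hcons (k+1)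
      · rw [if_neg ho]; exact hsub

lemma ctr_pos2 {rh : ℕ → XV V P}
    (hmono : ∀ k, (rh k).2 ⊆ (rh (k+1)).2)
    (hcons : Consistent own lam rh) :
    ∀ k i, i ∉ (rh (k+1)).2 → 1 < ctr own lam rh k i := by
  intro k i hi
  have hik : i ∉ (rh k).2 := fun hk => hi (hmono k hk)
  have h2 : (2 : ℕ∞) ≤ costFrom rh k i := by
    have := le_costFrom (ρ := rh) (n := k) (i := i) (c := 2) (fun j hj => by
      interval_cases j
      · simpa using hik
      · simpa using hi)
    exact_mod_cast this
  have := h2.trans (ctr_sound hmono hcons k i)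
  exact lt_of_lt_of_le (by norm_num) this

lemma ctr_cedge {rh : ℕ → XV V P}
    (hmono : ∀ k, (rh k).2 ⊆ (rh (k+1)).2)
    (hcons : Consistent own lam rh)
    (hXE : ∀ k, XEdge E F (rh k) (rh (k+1))) :
    ∀ k, CEdge E F own lam (rh k, ctr own lam rh k) (rh (k+1), ctr own lam rh (k+1)) := by
  intro k
  refine ⟨hXE k, fun i => ?_⟩
  by_cases hi : i ∈ (rh (k+1)).2
  · left
    exact ⟨hi, by show (if i ∈ (rh (k+1)).2 then _ else _) = 0; rw [if_pos hi]⟩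
  · have hlt : 1 < ctr own lam rh k i := ctr_pos2 hmono hcons k i hi
    by_cases ho : own (rh (k+1)).1 = i
    · right; right
      refine ⟨hi, ho, hlt, ?_⟩
      show (if i ∈ (rh (k+1)).2 then _ else _) = _
      rw [if_neg hi, if_pos ho]
    · right; left
      refine ⟨hi, ho, hlt, ?_⟩
      show (if i ∈ (rh (k+1)).2 then _ else _) = _
      rw [if_neg hi, if_neg ho]

lemma ctr_bounded [Finite V] [Finite P] {rh : ℕ → XV V P} :
    ∀ k i, ctr own lam rh k i ≤ (mR lam Set.univ : ℕ∞) ∨ ctr own lam rh k i = ⊤ := by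
  have hlam : ∀ w : XV V P, lam w ≤ (mR lam Set.univ : ℕ∞) ∨ lam w = ⊤ := by
    intro w
    by_cases h : lam w = ⊤
    · exact Or.inr h
    · exact Or.inl (lam_le_mR lam h)
  have hsub : ∀ a : ℕ∞, (a ≤ (mR lam Set.univ : ℕ∞) ∨ a = ⊤) →
      (a - 1 ≤ (mR lam Set.univ : ℕ∞) ∨ a - 1 = ⊤) := by
    rintro a (h | h)
    · exact Or.inl ((tsub_le_self).trans h)
    · right; rw [h]; rfl
  intro k
  induction k with
  | zero =>
    intro i
    have hc0 : ctr own lam rh 0 i =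
        (if i ∈ (rh 0).2 then 0 else if own (rh 0).1 = i then lam (rh 0) else ⊤) := rfl
    rw [hc0]
    by_cases hi : i ∈ (rh 0).2
    · rw [if_pos hi]; exact Or.inl (zero_le)
    · rw [if_neg hi]
      by_cases ho : own (rh 0).1 = i
      · rw [if_pos ho]; exact hlam (rh 0)
      · rw [if_neg ho]; exact Or.inr rfl
  | succ k ih =>
    intro i
    have hcS : ctr own lam rh (k+1) i =
       (if i ∈ (rh (k+1)).2 then 0
       else if own (rh (k+1)).1 = i then min (ctr own lam rh k i - 1) (lam (rh (k+1)))
       else ctr own lam rh k i - 1) := rfl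
    rw [hcS]
    by_cases hi : i ∈ (rh (k+1)).2
    · rw [if_pos hi]; exact Or.inl (zero_le)
    · rw [if_neg hi]
      by_cases ho : own (rh (k+1)).1 = i
      · rw [if_pos ho]
        rcases hsub _ (ih i) with h | h
        · exact Or.inl ((min_le_left _ _).trans h)
        · rcases hlam (rh (k+1)) with h2 | h2
          · exact Or.inl ((min_le_right _ _).trans h2)
          · right; rw [h, h2]; simp
      · rw [if_neg ho]
        exact hsub _ (ih i)

/-- Generic lasso-compression lemma for paths ranging in a finite set. -/
lemma exists_lasso {α : Type*} (π : ℕ → α) (D T N : ℕ) (hDT : D ≤ T)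
    (S : Finset α) (hS : ∀ k, π k ∈ S) (hcard : S.card ≤ N) :
    ∃ (g : ℕ → ℕ) (m q a : ℕ), 0 < q ∧ m + 1 ≤ N ∧ q ≤ N ∧ T ≤ a ∧
      (∀ k, k ≤ D → g k = k) ∧
      (∀ k, k ≤ m → D + k ≤ g (D + k)) ∧
      (∀ k, ∃ t, π (g k) = π t ∧ π (g (k + 1)) = π (t + 1)) ∧
      (∀ k, D + m ≤ k → π (g (k + q)) = π (g k)) ∧
      π (g (D + m)) = π a := by
  obtain ⟨a, b, haT, hbTN, hab, hpab⟩ :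
      ∃ a b : ℕ, T ≤ a ∧ b ≤ T + N ∧ a < b ∧ π a = π b := by
    obtain ⟨a', ha', b', hb', hne, heq⟩ :=
      Finset.exists_ne_map_eq_of_card_lt_of_maps_to (s := Finset.Icc T (T + N)) (t := S)
        (by rw [Nat.card_Icc]; omega) (fun k _ => hS k)
    rcases lt_or_gt_of_ne hne with h | h
    · exact ⟨a', b', (Finset.mem_Icc.1 ha').1, (Finset.mem_Icc.1 hb').2, h, heq⟩
    · exact ⟨b', a', (Finset.mem_Icc.1 hb').1, (Finset.mem_Icc.1 ha').2, h, heq.symm⟩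
  have hDa : D ≤ a := hDT.trans haT
  set q := b - a with hq
  have hqpos : 0 < q := by omega
  have hqN : q ≤ N := by omega
  have hballoon : a + q = b := by omega
  -- jump function
  have hjne : ∀ t : ℕ, t ≤ a → ((Finset.Icc t a).filter (fun s => π s = π t)).Nonempty :=
    fun t ht => ⟨t, by simp [Finset.mem_filter, Finset.mem_Icc, ht]⟩
  set j : ℕ → ℕ := fun t =>
    if h : t ≤ a then ((Finset.Icc t a).filter (fun s => π s = π t)).max' (hjne t h) else t
    with hjdef
  have hjmem : ∀ t, (ht : t ≤ a) → j t ∈ (Finset.Icc t a).filter (fun s => π s = π t) := by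
    intro t ht
    rw [hjdef]
    simp only [dif_pos ht]
    exact Finset.max'_mem _ _
  have hjle : ∀ t, t ≤ j t := by
    intro t
    by_cases ht : t ≤ a
    · have := hjmem t ht
      rw [Finset.mem_filter, Finset.mem_Icc] at this
      exact this.1.1
    · rw [hjdef]; simp [dif_neg ht]
  have hjlea : ∀ t, t ≤ a → j t ≤ a := by
    intro t ht
    have := hjmem t ht
    rw [Finset.mem_filter, Finset.mem_Icc] at this
    exact this.1.2
  have hjpi : ∀ t, t ≤ a → π (j t) = π t := by
    intro t ht
    have := hjmem t ht
    rw [Finset.mem_filter] at this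
    exact this.2
  have hjmax : ∀ t s, t ≤ s → s ≤ a → π s = π t → s ≤ j t := by
    intro t s hts hsa hps
    have ht : t ≤ a := hts.trans hsa
    rw [hjdef]
    simp only [dif_pos ht]
    exact Finset.le_max' _ s (by rw [Finset.mem_filter, Finset.mem_Icc]; exact ⟨⟨hts, hsa⟩, hps⟩)
  -- the compressing sequence
  set tseq : ℕ → ℕ := fun k => Nat.rec D (fun _ t => j t + 1) k with htseqdef
  have htseq0 : tseq 0 = D := rfl
  have htseqS : ∀ k, tseq (k + 1) = j (tseq k) + 1 := fun k => rfl
  have htmono1 : ∀ k, tseq k < tseq (k + 1) := by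
    intro k
    rw [htseqS k]
    exact Nat.lt_succ_of_le (hjle (tseq k))
  have htlb : ∀ k, D + k ≤ tseq k := by
    intro k
    induction k with
    | zero => simp [htseq0]
    | succ k ih => have := htmono1 k; omega
  have htmono : ∀ k l, k < l → tseq k < tseq l := by
    intro k l hkl
    induction l with
    | zero => omega
    | succ l ih =>
      rcases Nat.lt_or_ge k l with h | h
      · exact (ih h).trans (htmono1 l)
      · have : k = l := by omega
        subst this; exact htmono1 k
  have hfind : ∃ k, a < tseq k := ⟨a + 1, by have := htlb (a + 1); omega⟩
  have hfind1 : 1 ≤ Nat.find hfind := by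
    rcases Nat.eq_zero_or_pos (Nat.find hfind) with h | h
    · exfalso
      have := Nat.find_spec hfind
      rw [h, htseq0] at this
      omega
    · exact h
  set m := Nat.find hfind - 1 with hm
  have htm_le : ∀ k, k ≤ m → tseq k ≤ a := by
    intro k hk
    have := Nat.find_min hfind (m := k) (by omega)
    omega
  have htm1 : a < tseq (m + 1) := by
    have := Nat.find_spec hfind
    rwa [show m + 1 = Nat.find hfind by omega]
  have hja : j (tseq m) = a := by
    have h1 := hjlea (tseq m) (htm_le m (le_refl m))
    have h2 := htseqS m
    omega
  have hπm : π (tseq m) = π a := by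
    rw [← hja]
    exact (hjpi (tseq m) (htm_le m (le_refl m))).symm
  -- injectivity gives m + 1 ≤ N
  have hminj : ∀ k l, k ≤ m → l ≤ m → k < l → π (tseq k) ≠ π (tseq l) := by
    intro k l hk hl hkl heq
    have h1 : tseq l ≤ j (tseq k) :=
      hjmax (tseq k) (tseq l) (le_of_lt (htmono k l hkl)) (htm_le l hl) heq.symm
    have h2 : tseq (k + 1) ≤ tseq l := by
      rcases Nat.lt_or_ge (k + 1) l with h | h
      · exact le_of_lt (htmono _ _ h)
      · have : k + 1 = l := by omega
        rw [this]
    have := htseqS k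
    omega
  have hmN : m + 1 ≤ N := by
    have : (Finset.range (m + 1)).card ≤ S.card := by
      apply Finset.card_le_card_of_injOn (fun k => π (tseq k)) (fun k _ => hS (tseq k))
      intro k hk l hl hkl
      simp only [Finset.coe_range, Set.mem_Iio] at hk hl
      by_contra hne
      rcases Nat.lt_or_ge k l with h | h
      · exact hminj k l (by omega) (by omega) h hkl
      · exact hminj l k (by omega) (by omega) (by omega) hkl.symm
    rw [Finset.card_range] at this
    omega
  -- the reindexing function
  set g : ℕ → ℕ := fun k =>
    if k ≤ D + m then (if k ≤ D then k else tseq (k - D)) else a + (k - (D + m)) % q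
    with hgdef
  have hgid : ∀ k, k ≤ D → g k = k := by
    intro k hk
    rw [hgdef]
    simp only [if_pos (by omega : k ≤ D + m), if_pos hk]
  have hgts : ∀ k, k ≤ m → g (D + k) = tseq k := by
    intro k hk
    rcases Nat.eq_zero_or_pos k with h | h
    · subst h; rw [htseq0]; simpa using hgid D (le_refl D)
    · rw [hgdef]
      simp only [if_pos (by omega : D + k ≤ D + m), if_neg (by omega : ¬ D + k ≤ D)]
      congr 1
      omega
  have hglb : ∀ k, k ≤ m → D + k ≤ g (D + k) := by
    intro k hk
    rw [hgts k hk]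
    exact htlb k
  have hgloop : ∀ r, 1 ≤ r → g (D + m + r) = a + r % q := by
    intro r hr
    rw [hgdef]
    simp only [if_neg (by omega : ¬ D + m + r ≤ D + m)]
    congr 2
    omega
  have hgm : π (g (D + m)) = π a := by
    rw [hgts m (le_refl m)]; exact hπm
  refine ⟨g, m, q, a, hqpos, hmN, hqN, haT, hgid, hglb, ?_, ?_, hgm⟩
  · -- edge transport
    intro k
    rcases Nat.lt_or_ge k D with hk | hk
    · refine ⟨k, by rw [hgid k (by omega)], ?_⟩
      rcases Nat.lt_or_ge (k + 1) (D + 1) with h2 | h2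
      · rw [hgid (k + 1) (by omega)]
      · rw [show k + 1 = D by omega, hgid D (le_refl D)]
    rcases Nat.lt_or_ge k (D + m) with hk2 | hk2
    · -- D ≤ k < D + m
      set r := k - D with hr
      have hrm : r < m := by omega
      refine ⟨j (tseq r), ?_, ?_⟩
      · rw [show k = D + r by omega, hgts r (by omega)]
        exact (hjpi (tseq r) (htm_le r (by omega))).symm
      · rw [show k + 1 = D + (r + 1) by omega, hgts (r + 1) (by omega), htseqS r]
    rcases Nat.eq_or_lt_of_le hk2 with hk3 | hk3
    · -- k = D + m
      refine ⟨a, by rw [← hk3]; exact hgm, ?_⟩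
      rw [show k + 1 = D + m + 1 by omega, hgloop 1 (le_refl 1)]
      rcases Nat.lt_or_ge 1 q with hq2 | hq2
      · rw [Nat.mod_eq_of_lt hq2]
      · have hq1 : q = 1 := by omega
        rw [hq1]
        norm_num
        rw [hpab]
        congr 1
        omega
    · -- k > D + m
      set r := k - (D + m) with hr
      have hr1 : 1 ≤ r := by omega
      refine ⟨a + r % q, by rw [show k = D + m + r by omega, hgloop r hr1], ?_⟩
      rw [show k + 1 = D + m + (r + 1) by omega, hgloop (r + 1) (by omega)]
      have hdm := Nat.div_add_mod r q
      rcases Nat.lt_or_ge (r % q + 1) q with h2 | h2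
      · have hmod : (r + 1) % q = r % q + 1 := by
          conv_lhs => rw [show r + 1 = (r % q + 1) + q * (r / q) by omega]
          rw [Nat.add_mul_mod_self_left]
          exact Nat.mod_eq_of_lt h2
        rw [hmod, ← Nat.add_assoc]
      · have hq2 : r % q + 1 = q := by
          have := Nat.mod_lt r (y := q) (by omega)
          omega
        have hmod : (r + 1) % q = 0 := by
          conv_lhs => rw [show r + 1 = q + q * (r / q) by omega]
          rw [Nat.add_mul_mod_self_left, Nat.mod_self]
        rw [hmod, Nat.add_zero, hpab]
        congr 1
        omega
  · -- periodicity
    intro k hk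
    rcases Nat.eq_or_lt_of_le hk with h | h
    · rw [← h, hgloop q (by omega), Nat.mod_self, Nat.add_zero, hgm]
    · set r := k - (D + m) with hr
      rw [show k + q = D + m + (r + q) by omega, show k = D + m + r by omega,
        hgloop (r + q) (by omega), hgloop r (by omega), Nat.add_mod_right]

end AuxLemmas2

/-- the initialized reachability game `(G, v₀)` has an SPE with cost
profile between `x` and `y` if and only if the counter graph `𝐂(λ*)` contains an
infinite lasso path `h·g^ω` from `x₀^C` with `|hg| ≤ d + 2·|𝐂(λ*)|`, where
`d = max{x_i : x_i < +∞}`, whose corresponding play has cost profile between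
`x` and `y`. -/
theorem stmt16 {V P : Type*} [Fintype V] [Fintype P]
    (E : V → V → Prop) (F : P → Set V) (own : V → P) (v0 : V)
    (htot : ∀ u : V, ∃ w, E u w)
    (lam : XV V P → ℕ∞)
    (hfix : ∀ w, update E F own lam w = lam w)
    (hchar : ∀ ρ : ℕ → V, ρ 0 = v0 → (∀ k, E (ρ k) (ρ (k + 1))) →
      ((∃ σ, IsSPEB E F own v0 σ ∧ ∀ k, outcomeB σ [] v0 k = ρ k) ↔
        Consistent own lam fun k => (ρ k, {i | ∃ j ≤ k, ρ j ∈ F i})))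
    (x y : P → ℕ∞) :
    (∃ σ, IsSPEB E F own v0 σ ∧
      ∀ i, x i ≤ costB F [] (fun k => outcomeB σ [] v0 k) i ∧
        costB F [] (fun k => outcomeB σ [] v0 k) i ≤ y i) ↔
    (∃ π : ℕ → CV V P,
      π 0 = startC own lam (v0, {i | v0 ∈ F i}) ∧
      (∀ k, CEdge E F own lam (π k) (π (k + 1))) ∧
      (∃ p q : ℕ, 0 < q ∧
        p + q ≤ (Finset.univ.sup fun i => (x i).toNat) +
          2 * (Fintype.card V * 2 ^ Fintype.card P *
            (mR lam Set.univ + 2) ^ Fintype.card P) ∧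
        ∀ k, p ≤ k → π (k + q) = π k) ∧
      ∀ i, x i ≤ cost (fun k => (π k).1) i ∧ cost (fun k => (π k).1) i ≤ y i) := by
  classical
  set D := (Finset.univ.sup fun i => (x i).toNat) with hD
  set N := Fintype.card V * 2 ^ Fintype.card P * (mR lam Set.univ + 2) ^ Fintype.card P with hN
  constructor
  · rintro ⟨σ, hσ, hxy⟩
    set ρ : ℕ → V := fun k => outcomeB σ [] v0 k with hρ
    have hρ0 : ρ 0 = v0 := rfl
    have hρE : ∀ k, E (ρ k) (ρ (k + 1)) := fun k => outcomeB_edge hσ.1 k [] v0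
    set rh : ℕ → XV V P := fun k => ((ρ k, {i | ∃ j ≤ k, ρ j ∈ F i}) : XV V P) with hrh
    have hcons : Consistent own lam rh := (hchar ρ hρ0 hρE).1 ⟨σ, hσ, fun k => rfl⟩
    have hvismono : ∀ s t, s ≤ t → (rh s).2 ⊆ (rh t).2 := by
      intro s t hst i hi
      obtain ⟨j, hj, hf⟩ := hi
      exact ⟨j, hj.trans hst, hf⟩
    have hXE : ∀ k, XEdge E F (rh k) (rh (k + 1)) := by
      intro k
      refine ⟨hρE k, ?_⟩
      show {i | ∃ j ≤ k + 1, ρ j ∈ F i} = {i | ∃ j ≤ k, ρ j ∈ F i} ∪ {i | ρ (k + 1) ∈ F i}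
      ext i
      simp only [Set.mem_setOf_eq, Set.mem_union]
      constructor
      · rintro ⟨j, hj, hf⟩
        rcases Nat.lt_or_ge j (k + 1) with h | h
        · exact Or.inl ⟨j, by omega, hf⟩
        · right; rwa [show j = k + 1 by omega] at hf
      · rintro (⟨j, hj, hf⟩ | hf)
        · exact ⟨j, by omega, hf⟩
        · exact ⟨k + 1, le_refl _, hf⟩
    have hcost : ∀ i, costB F [] (fun k => outcomeB σ [] v0 k) i = cost rh i :=
      fun i => costB_eq_cost F ρ i
    set c : ℕ → P → ℕ∞ := ctr own lam rh with hc
    set piC : ℕ → CV V P := fun k => (rh k, c k) with hpiC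
    have hmono1 : ∀ k, (rh k).2 ⊆ (rh (k + 1)).2 := fun k => hvismono k (k + 1) (by omega)
    have hCE : ∀ k, CEdge E F own lam (piC k) (piC (k + 1)) :=
      fun k => ctr_cedge hmono1 hcons hXE k
    have hstart : piC 0 = startC own lam ((v0, {i | v0 ∈ F i}) : XV V P) := by
      have h1 : rh 0 = ((v0, {i | v0 ∈ F i}) : XV V P) := by
        have h2 : {i | ∃ j ≤ 0, ρ j ∈ F i} = {i | v0 ∈ F i} := by
          ext i
          simp only [Set.mem_setOf_eq, Nat.le_zero]
          constructor
          · rintro ⟨j, rfl, hf⟩; exact hf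
          · intro hf; exact ⟨0, rfl, hf⟩
        show ((ρ 0, {i | ∃ j ≤ 0, ρ j ∈ F i}) : XV V P) = _
        rw [h2, hρ0]
      show (rh 0, (startC own lam (rh 0)).2) = _
      rw [h1]
      rfl
    set Cset : Finset ℕ∞ :=
      insert ⊤ ((Finset.range (mR lam Set.univ + 1)).image (fun n : ℕ => (n : ℕ∞))) with hCset
    have hCcard : Cset.card ≤ mR lam Set.univ + 2 := by
      refine (Finset.card_insert_le _ _).trans ?_
      have h1 := Finset.card_image_le (f := fun n : ℕ => (n : ℕ∞))
        (s := Finset.range (mR lam Set.univ + 1))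
      rw [Finset.card_range] at h1
      omega
    have hCmem : ∀ k i, c k i ∈ Cset := by
      intro k i
      have hcb := ctr_bounded (own := own) (lam := lam) (rh := rh) k i
      rw [← hc] at hcb
      rcases hcb with h | h
      · apply Finset.mem_insert_of_mem
        apply Finset.mem_image.2
        have hne : c k i ≠ ⊤ := fun e => by rw [e] at h; simp at h
        refine ⟨(c k i).toNat, ?_, ENat.coe_toNat hne⟩
        rw [Finset.mem_range]
        have h3 : ((c k i).toNat : ℕ∞) ≤ ((mR lam Set.univ : ℕ) : ℕ∞) := by
          rw [ENat.coe_toNat hne]; exact h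
        have h4 : (c k i).toNat ≤ mR lam Set.univ := by exact_mod_cast h3
        omega
      · rw [h]; exact Finset.mem_insert_self _ _
    set S : Finset (CV V P) :=
      (Finset.univ : Finset (XV V P)) ×ˢ Fintype.piFinset (fun _ : P => Cset) with hSdef
    have hmemS : ∀ k, piC k ∈ S := by
      intro k
      rw [hSdef]
      refine Finset.mem_product.2 ⟨Finset.mem_univ _, ?_⟩
      rw [Fintype.mem_piFinset]
      intro i
      exact hCmem k i
    have hcardXV : Fintype.card (XV V P) = Fintype.card V * 2 ^ Fintype.card P := by
      rw [Fintype.card_prod]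
      congr 1
      rw [show Fintype.card (Set P) = Fintype.card (P → Prop) from
        Fintype.card_congr (Equiv.refl _), Fintype.card_fun, Fintype.card_prop]
    have hScard : S.card ≤ N := by
      rw [hSdef, Finset.card_product, Finset.card_univ, hcardXV]
      have h2 : (Fintype.piFinset (fun _ : P => Cset)).card
          ≤ (mR lam Set.univ + 2) ^ Fintype.card P := by
        rw [Fintype.card_piFinset]
        calc ∏ _i : P, Cset.card ≤ ∏ _i : P, (mR lam Set.univ + 2) :=
              Finset.prod_le_prod (fun _ _ => Nat.zero_le _) (fun _ _ => hCcard)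
          _ = (mR lam Set.univ + 2) ^ Fintype.card P := by
              rw [Finset.prod_const, Finset.card_univ]
      rw [hN]
      exact Nat.mul_le_mul le_rfl h2
    obtain ⟨T0, hT0⟩ : ∃ T0, ∀ t, T0 ≤ t → (rh t).2 = (rh T0).2 := by
      refine ⟨Finset.univ.sup (fun i : P => if h : ∃ j, ρ j ∈ F i then Nat.find h else 0),
        fun t ht => ?_⟩
      apply Set.Subset.antisymm ?_ (hvismono _ t ht)
      rintro i ⟨jj, hjj, hjf⟩
      have hex : ∃ j, ρ j ∈ F i := ⟨jj, hjf⟩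
      refine ⟨Nat.find hex, ?_, Nat.find_spec hex⟩
      have h1 : (if h : ∃ j, ρ j ∈ F i then Nat.find h else 0)
          ≤ Finset.univ.sup (fun i : P => if h : ∃ j, ρ j ∈ F i then Nat.find h else 0) :=
        Finset.le_sup (f := fun i : P => if h : ∃ j, ρ j ∈ F i then Nat.find h else 0)
          (Finset.mem_univ i)
      rw [dif_pos hex] at h1
      exact h1
    set T := max D T0 with hT
    have hDT : D ≤ T := le_max_left _ _
    have hstable : ∀ t, T ≤ t → (rh t).2 = (rh T).2 := by
      intro t ht
      rw [hT0 t (le_trans (le_max_right _ _) ht), hT0 T (le_max_right _ _)]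
    have hsubW : ∀ t, (rh t).2 ⊆ (rh T).2 := by
      intro t
      rcases le_total t T with h | h
      · exact hvismono t T h
      · rw [hstable t h]
    obtain ⟨g, m, q, a, hqpos, hmN, hqN, haT, hgid, hglb, hedge, hper, hgm⟩ :=
      exists_lasso piC D T N hDT S hmemS hScard
    refine ⟨fun k => piC (g k), ?_, ?_, ⟨D + m, q, hqpos, ?_, ?_⟩, ?_⟩
    · show piC (g 0) = _
      rw [hgid 0 (Nat.zero_le D)]
      exact hstart
    · intro k
      show CEdge E F own lam (piC (g k)) (piC (g (k + 1)))
      obtain ⟨t, h1, h2⟩ := hedge k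
      rw [h1, h2]
      exact hCE t
    · omega
    · intro k hk
      show piC (g (k + q)) = piC (g k)
      exact hper k hk
    · intro i
      have hx := (hxy i).1
      have hy := (hxy i).2
      rw [hcost i] at hx hy
      have hgD : ∀ t, t ≤ D → (piC (g t)).1 = rh t := by
        intro t ht
        rw [hgid t ht]
      by_cases hiW : i ∈ (rh T).2
      · have hex : ∃ k, i ∈ (rh (0 + k)).2 := ⟨T, by simpa using hiW⟩
        obtain ⟨ti, hticost, hhit⟩ :
            ∃ ti : ℕ, cost rh i = (ti : ℕ∞) ∧ ∀ t, i ∈ (rh t).2 ↔ ti ≤ t := by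
          refine ⟨Nat.find hex, by
            rw [cost_def]
            exact le_antisymm (costFrom_le (Nat.find_spec hex))
              (le_costFrom fun k hk => Nat.find_min hex hk), fun t => ?_⟩
          constructor
          · intro ht
            by_contra hlt
            exact Nat.find_min hex (m := t) (by omega) (by simpa using ht)
          · intro ht
            have h5 := Nat.find_spec hex
            rw [Nat.zero_add] at h5
            exact hvismono _ t ht h5
        rw [hticost] at hx hy
        have hxfin : x i ≠ ⊤ := by
          intro e
          rw [e, top_le_iff] at hx
          exact (ENat.coe_ne_top ti) hx
        have hxD : x i ≤ (D : ℕ∞) := by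
          rw [← ENat.coe_toNat hxfin]
          have h6 : (x i).toNat ≤ D := by
            rw [hD]
            exact Finset.le_sup (f := fun i => (x i).toNat) (Finset.mem_univ i)
          exact_mod_cast h6
        constructor
        · rw [cost_def]
          apply le_sInf
          rintro bb ⟨s, hs, rfl⟩
          simp only [Set.mem_setOf_eq, Nat.zero_add] at hs
          show x i ≤ (s : ℕ∞)
          rcases Nat.lt_or_ge D s with h | h
          · exact hxD.trans (by exact_mod_cast h.le)
          · rw [hgid s h] at hs
            have h2 := (hhit s).1 hs
            exact hx.trans (by exact_mod_cast h2)
        · refine le_trans ?_ hy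
          rcases le_or_gt ti D with h | h
          · rw [cost_def]
            refine costFrom_le (n := 0) (k := ti) ?_
            rw [Nat.zero_add]
            show i ∈ (piC (g ti)).1.2
            rw [hgD ti h]
            exact (hhit ti).2 le_rfl
          · have hgDm : ti ≤ g (D + m) := by
              have hva : (piC (g (D + m))).1.2 = (piC a).1.2 := by rw [hgm]
              have hia : i ∈ (rh a).2 := by
                rw [hstable a haT]
                exact hiW
              have h6 : i ∈ (rh (g (D + m))).2 := by
                show i ∈ (piC (g (D + m))).1.2
                rw [hva]
                exact hia
              exact (hhit _).1 h6
            have hexj : ∃ jj, ti ≤ g (D + jj) := ⟨m, hgDm⟩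
            have hj0m : Nat.find hexj ≤ m := Nat.find_le hgDm
            set j0 := Nat.find hexj with hj0
            have hj0pos : 1 ≤ j0 := by
              by_contra h7
              have h8 : j0 = 0 := by omega
              have h9 := Nat.find_spec hexj
              rw [← hj0] at h9
              rw [h8, Nat.add_zero, hgid D (le_refl D)] at h9
              omega
            have hprev : ¬ ti ≤ g (D + (j0 - 1)) := Nat.find_min hexj (by omega)
            have hlb := hglb (j0 - 1) (by omega)
            have hDj0 : D + j0 ≤ ti := by omega
            have hhit' : i ∈ (rh (g (D + j0))).2 := (hhit _).2 (Nat.find_spec hexj)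
            rw [cost_def]
            refine le_trans (costFrom_le (n := 0) (k := D + j0) ?_) ?_
            · rw [Nat.zero_add]
              exact hhit'
            · exact_mod_cast hDj0
      · have hnever : ∀ t, i ∉ (rh t).2 := fun t ht => hiW (hsubW t ht)
        have htop : cost rh i = ⊤ :=
          costFrom_eq_top (fun k => by simpa using hnever k)
        rw [htop, top_le_iff] at hy
        have htop' : cost (fun k => (piC (g k)).1) i = ⊤ :=
          costFrom_eq_top (fun k => by simpa using hnever (g (0 + k)))
        rw [htop', hy]
        exact ⟨le_top, le_refl _⟩
  · rintro ⟨π, h0, hE, _, hcostpi⟩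
    set ρ : ℕ → V := fun k => (π k).1.1 with hρ
    have hρ0 : ρ 0 = v0 := by
      show (π 0).1.1 = v0
      rw [h0]
      rfl
    have hρE : ∀ k, E (ρ k) (ρ (k + 1)) := fun k => (hE k).1.1
    have hvis : ∀ k, (π k).1.2 = {i | ∃ j ≤ k, ρ j ∈ F i} := vis_eq_of_cpath h0 hE
    have hcons : Consistent own lam (fun k => (π k).1) := consistent_of_cpath hfix h0 hE
    have hrh_eq : (fun k => (π k).1)
        = (fun k => ((ρ k, {i | ∃ j ≤ k, ρ j ∈ F i}) : XV V P)) := by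
      funext k
      exact Prod.ext rfl (hvis k)
    have hcons' : Consistent own lam
        (fun k => ((ρ k, {i | ∃ j ≤ k, ρ j ∈ F i}) : XV V P)) := hrh_eq ▸ hcons
    obtain ⟨σ, hσ, hout⟩ := (hchar ρ hρ0 hρE).2 hcons'
    refine ⟨σ, hσ, fun i => ?_⟩
    have hfun : (fun k => outcomeB σ [] v0 k) = ρ := funext hout
    rw [hfun, costB_eq_cost F ρ i, ← hrh_eq]
    exact hcostpi i

end SPE
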